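/- Let q be a prime power, F_q a finite field, 1 ≤ k ≤ n ≤ q−1, and let α_1, …, α_n ∈ F_q be pairwise distinct. For any secret s ∈ F_q and any function f(x) = s + ∑_{j=1}^{k-1} a_j x^j with a_1,…,a_{k-1} drawn independently and uniformly from F_q, and any subset T ⊆ {1,…,n} with |T| ≤ k−1, the tuple (f(α_i))_{i ∈ T} is uniformly distributed on F_q^{|T|}, independently of s. Consequently, the shares in T are statistically independent of the secret s when s is also random. -/

import Mathlib

open scoped Classical ENNReal

private lemma pmf_eq_of_subsingleton {X : Type*} [Subsingleton X] (p q : PMF X) : p = q := by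
  ext y
  have hp := p.tsum_coe
  have hq := q.tsum_coe
  rw [tsum_eq_single y (fun b hb => absurd (Subsingleton.elim b y) hb)] at hp
  rw [tsum_eq_single y (fun b hb => absurd (Subsingleton.elim b y) hb)] at hq
  rw [hp, hq]

private lemma map_uniform_affine {A B : Type*} [Fintype A] [Fintype B]
    [Nonempty A] [Nonempty B] [AddCommGroup A] [AddCommGroup B] (f : A → B)
    (haff : ∀ a b c, f (a - b + c) = f a - f b + f c) (hsurj : Function.Surjective f) :
    PMF.map f (PMF.uniformOfFintype A) = PMF.uniformOfFintype B := by
  have hcard : ∀ y y' : B, (Finset.univ.filter fun a => f a = y).card =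
      (Finset.univ.filter fun a => f a = y').card := by
    intro y y'
    obtain ⟨b, hb⟩ := hsurj y
    obtain ⟨b', hb'⟩ := hsurj y'
    apply Finset.card_nbij' (i := fun a => a - b + b') (j := fun a => a - b' + b)
    · intro a ha
      simp only [Finset.coe_filter, Set.mem_setOf_eq, Finset.mem_filter, Finset.mem_univ, true_and] at ha ⊢
      rw [haff, ha, hb, hb']; abel
    · intro a ha
      simp only [Finset.coe_filter, Set.mem_setOf_eq, Finset.mem_filter, Finset.mem_univ, true_and] at ha ⊢
      rw [haff, ha, hb, hb']; abel
    · intro a _; simp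
    · intro a _; simp
  have key : ∀ y : B, (Finset.univ.filter fun a => f a = y).card * Fintype.card B =
      Fintype.card A := by
    intro y
    have h1 : Fintype.card A =
        ∑ y' : B, (Finset.univ.filter fun a => f a = y').card :=
      Finset.card_eq_sum_card_fiberwise (fun a _ => Finset.mem_univ _)
    rw [h1, Finset.sum_congr rfl (fun y' _ => hcard y' y), Finset.sum_const,
      Finset.card_univ, smul_eq_mul, mul_comm]
  ext y
  rw [PMF.map_apply, PMF.uniformOfFintype_apply, tsum_fintype]
  simp only [PMF.uniformOfFintype_apply]
  have hsum : ∑ a : A, (if y = f a then ((Fintype.card A : ℝ≥0∞))⁻¹ else 0)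
      = ((Finset.univ.filter fun a => f a = y).card : ℝ≥0∞) * (Fintype.card A : ℝ≥0∞)⁻¹ := by
    rw [← Finset.sum_filter, Finset.sum_const, nsmul_eq_mul]
    congr 3
    apply Finset.filter_congr
    intro a _
    simp [eq_comm]
  rw [hsum]
  set c := (Finset.univ.filter fun a => f a = y).card with hc
  have hc0 : c ≠ 0 := by
    obtain ⟨b, hb⟩ := hsurj y
    have : b ∈ Finset.univ.filter fun a => f a = y := by simp [hb]
    exact Finset.card_ne_zero_of_mem this
  have hA : (Fintype.card A : ℝ≥0∞) = (c : ℝ≥0∞) * (Fintype.card B : ℝ≥0∞) := by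
    exact_mod_cast (key y).symm
  rw [hA, ENNReal.mul_inv (Or.inl (Nat.cast_ne_zero.2 hc0)) (Or.inl (ENNReal.natCast_ne_top c)),
    ← mul_assoc, ENNReal.mul_inv_cancel (Nat.cast_ne_zero.2 hc0) (ENNReal.natCast_ne_top c),
    one_mul]

/-- Perfect secrecy of Shamir / Reed–Solomon secret sharing: with `f(x) = s + ∑_{j=1}^{k-1} a_j x^j`
for independently uniform coefficients `a_1,…,a_{k-1}` and pairwise distinct nonzero evaluation
points `α_1,…,α_n`, for every subset `T` with `|T| ≤ k−1` and every secret `s`, the tuple of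
shares `(f(α_i))_{i∈T}` is uniform on `F_q^{|T|}` — in particular its distribution does not
depend on `s`, so at most `k−1` shares are statistically independent of the secret. -/
theorem shamir_perfect_secrecy {F : Type*} [Field F] [Fintype F] [DecidableEq F]
    (q n k : ℕ) (hq : Fintype.card F = q) (hk : 1 ≤ k) (hkn : k ≤ n) (hn : n ≤ q - 1)
    (α : Fin n → F) (hα : Function.Injective α) (hα0 : ∀ i, α i ≠ 0)
    (T : Finset (Fin n)) (hT : T.card ≤ k - 1) (s : F) :
    PMF.map
        (fun a : Fin (k - 1) → F =>
          fun i : ↥T => s + ∑ j : Fin (k - 1), a j * (α i) ^ ((j : ℕ) + 1))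
        (PMF.uniformOfFintype (Fin (k - 1) → F)) =
      PMF.uniformOfFintype (↥T → F) := by
  by_cases hk1 : k - 1 = 0
  · have hT0 : T = ∅ := Finset.card_eq_zero.1 (Nat.le_zero.1 (hk1 ▸ hT))
    have hE : IsEmpty ↥T := by rw [hT0]; infer_instance
    have : Subsingleton (↥T → F) := ⟨fun f g => funext fun i => (hE.false i).elim⟩
    exact pmf_eq_of_subsingleton _ _
  · have hk1' : 1 ≤ k - 1 := Nat.one_le_iff_ne_zero.2 hk1
    set g : (Fin (k - 1) → F) → (↥T → F) :=
      fun a => fun i : ↥T => s + ∑ j : Fin (k - 1), a j * (α i) ^ ((j : ℕ) + 1) with hg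
    have haff : ∀ a b c, g (a - b + c) = g a - g b + g c := by
      intro a b c
      funext i
      simp only [hg, Pi.add_apply, Pi.sub_apply, sub_mul, add_mul,
        Finset.sum_add_distrib, Finset.sum_sub_distrib]
      ring
    have hsurj : Function.Surjective g := by
      intro y
      set v : ↥T → F := fun i => α i with hv
      have hinj : Set.InjOn v (Finset.univ : Finset ↥T) := by
        intro i _ j _ h
        exact Subtype.ext (hα h)
      set P := Lagrange.interpolate Finset.univ v (fun i => (y i - s) / α i) with hP
      have hdeg : P.natDegree < k - 1 := by
        by_cases h0 : P = 0
        · rw [h0]; simp only [Polynomial.natDegree_zero]; omega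
        · rw [Polynomial.natDegree_lt_iff_degree_lt h0]
          refine lt_of_lt_of_le (Lagrange.degree_interpolate_lt _ hinj) ?_
          rw [Finset.card_univ, Fintype.card_coe]
          exact_mod_cast hT
      refine ⟨fun j => P.coeff j, ?_⟩
      funext i
      simp only [hg]
      have h1 : ∑ j : Fin (k-1), P.coeff j * α i ^ ((j : ℕ) + 1)
          = (∑ j ∈ Finset.range (k-1), P.coeff j * (α i) ^ j) * α i := by
        rw [Finset.sum_mul, ← Fin.sum_univ_eq_sum_range
          (fun j => P.coeff j * (α i) ^ j * α i) (k-1)]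
        apply Finset.sum_congr rfl
        intro j _
        rw [pow_succ]; ring
      rw [h1, ← Polynomial.eval_eq_sum_range' hdeg,
        Lagrange.eval_interpolate_at_node _ hinj (Finset.mem_univ i),
        div_mul_cancel₀ _ (hα0 i)]
      ring
    exact map_uniform_affine g haff hsurj
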